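/- Let 𝒜 be a van Hove sequence. If f, g ∈ Bap²_𝒜(G), then the pointwise product fg belongs to Bap^1_𝒜(G). -/

import Mathlib

open MeasureTheory Filter Topology
open scoped ENNReal Pointwise

noncomputable section

namespace MAP

section Defs

variable {G : Type*} [MeasurableSpace G] [TopologicalSpace G] [AddCommGroup G]

/-- The `K`-boundary `∂^K A` of a set `A`. -/
def kBoundary (K A : Set G) : Set G :=
  (closure (A + K) \ A) ∪ ((Aᶜ - K) ∩ closure A)

/-- A van Hove sequence: nonempty relatively compact open sets whose `K`-boundaries
become negligible compared to their volume. -/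
structure IsVanHove (θ : Measure G) (A : ℕ → Set G) : Prop where
  isOpen : ∀ n, IsOpen (A n)
  nonempty : ∀ n, (A n).Nonempty
  relCompact : ∀ n, IsCompact (closure (A n))
  boundary : ∀ K : Set G, IsCompact K →
    Tendsto (fun n => θ (kBoundary K (A n)) / θ (A n)) atTop (𝓝 0)

/-- `(1/θ(A)) ∫_A |f|^p`, valued in `ℝ≥0∞`. -/
def lpAvg (θ : Measure G) (A : Set G) (p : ℝ) (f : G → ℂ) : ℝ≥0∞ :=
  (∫⁻ t in A, ENNReal.ofReal (‖f t‖ ^ p) ∂θ) / θ A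

/-- The Besicovitch seminorm `‖f‖_{b,p,𝒜}`. -/
def besSN (θ : Measure G) (A : ℕ → Set G) (p : ℝ) (f : G → ℂ) : ℝ≥0∞ :=
  (limsup (fun n => lpAvg θ (A n) p f) atTop) ^ (1 / p)

/-- The Weyl seminorm `‖f‖_{w,p,𝒜}`. -/
def weylSN (θ : Measure G) (A : ℕ → Set G) (p : ℝ) (f : G → ℂ) : ℝ≥0∞ :=
  (limsup (fun n => ⨆ x : G, lpAvg θ (x +ᵥ A n) p f) atTop) ^ (1 / p)

/-- Membership in `L^p_loc`. -/
def MemLpLoc (θ : Measure G) (p : ℝ) (f : G → ℂ) : Prop :=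
  AEStronglyMeasurable f θ ∧
    ∀ K : Set G, IsCompact K → (∫⁻ t in K, ENNReal.ofReal (‖f t‖ ^ p) ∂θ) < ⊤

/-- A relatively dense subset of `G`. -/
def RelDense (S : Set G) : Prop :=
  ∃ K : Set G, IsCompact K ∧ ∀ g : G, ∃ t ∈ S, g - t ∈ K

/-- Mean almost periodicity of a function with respect to a van Hove sequence. -/
def MeanAP (θ : Measure G) (A : ℕ → Set G) (f : G → ℂ) : Prop :=
  ∀ ε : ℝ, 0 < ε →
    RelDense {t : G | besSN θ A 1 (fun s => f s - f (s - t)) < ENNReal.ofReal ε}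

/-- `C_c(G)`: continuous compactly supported functions. -/
def IsCc (φ : G → ℂ) : Prop := Continuous φ ∧ HasCompactSupport φ

/-- `(1/θ(A)) ∫_A f`, valued in `ℂ`. -/
def cAvg (θ : Measure G) (A : Set G) (f : G → ℂ) : ℂ :=
  (∫ t in A, f t ∂θ) / ((θ A).toReal : ℂ)

/-- `(1/θ(A)) ∫_{s+A} f`, valued in `ℂ`. -/
def shiftAvg (θ : Measure G) (A : Set G) (s : G) (f : G → ℂ) : ℂ :=
  (∫ t in s +ᵥ A, f t ∂θ) / ((θ A).toReal : ℂ)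

/-- `(1/θ(A)) ∫_{s+A} f` for a real-valued `f`. -/
def shiftAvgR (θ : Measure G) (A : Set G) (s : G) (f : G → ℝ) : ℝ :=
  (∫ t in s +ᵥ A, f t ∂θ) / (θ A).toReal

/-- The mean `M_𝒜(f)` exists and equals `c`. -/
def MeanTendsto (θ : Measure G) (A : ℕ → Set G) (f : G → ℂ) (c : ℂ) : Prop :=
  Tendsto (fun n => cAvg θ (A n) f) atTop (𝓝 c)

/-- The Dirac comb of a point set. -/
def diracComb (Λ : Set G) : Measure G := Measure.sum fun x : Λ => Measure.dirac (x : G)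

/-- Convolution `(μ * φ)(t) = ∫ φ(t - s) dμ(s)` of a positive measure with a function. -/
def convM (μ : Measure G) (φ : G → ℂ) : G → ℂ := fun t => ∫ s, φ (t - s) ∂μ

/-- Uniform discreteness of a point set. -/
def UnifDiscrete (Λ : Set G) : Prop :=
  ∃ U : Set G, IsOpen U ∧ (0 : G) ∈ U ∧
    ∀ x ∈ Λ, ∀ y ∈ Λ, x ≠ y → (x +ᵥ U) ∩ (y +ᵥ U) = ∅

/-- Delone sets: uniformly discrete and relatively dense. -/
def IsDelone (Λ : Set G) : Prop := UnifDiscrete Λ ∧ RelDense Λ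

end Defs

section CharDefs

variable (G : Type*) [TopologicalSpace G] [AddCommGroup G]

/-- The set of continuous characters of `G`, inside `C(G, ℂ)`. -/
def CharSet : Set C(G, ℂ) :=
  {χ | (∀ x, ‖χ x‖ = 1) ∧ ∀ x y, χ (x + y) = χ x * χ y}

/-- The dual group `Ĝ` of continuous characters, with the compact-open topology. -/
abbrev Char : Type _ := ↥(CharSet G)

instance : MeasurableSpace (Char G) := borel _

instance : BorelSpace (Char G) := ⟨rfl⟩

end CharDefs

section CharUse

variable {G : Type*} [MeasurableSpace G] [TopologicalSpace G] [AddCommGroup G]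

/-- Trigonometric polynomials: finite linear combinations of characters. -/
def IsTrigPoly (P : G → ℂ) : Prop :=
  ∃ (n : ℕ) (c : Fin n → ℂ) (χ : Fin n → Char G),
    P = fun x => ∑ i, c i * ((χ i : C(G, ℂ)) x)

/-- Besicovitch `p`-almost periodicity of a function. -/
def BapMem (θ : Measure G) (A : ℕ → Set G) (p : ℝ) (f : G → ℂ) : Prop :=
  MemLpLoc θ p f ∧ ∀ ε : ℝ, 0 < ε →
    ∃ P : G → ℂ, IsTrigPoly P ∧ besSN θ A p (fun x => f x - P x) < ENNReal.ofReal ε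

/-- Weyl `p`-almost periodicity of a function. -/
def WapMem (θ : Measure G) (A : ℕ → Set G) (p : ℝ) (f : G → ℂ) : Prop :=
  MemLpLoc θ p f ∧ ∀ ε : ℝ, 0 < ε →
    ∃ P : G → ℂ, IsTrigPoly P ∧ weylSN θ A p (fun x => f x - P x) < ENNReal.ofReal ε

/-- The Fourier–Bohr coefficient of `f` at `χ` along `A` exists and equals `a`. -/
def FBTendsto (θ : Measure G) (A : ℕ → Set G) (f : G → ℂ) (χ : Char G) (a : ℂ) : Prop :=
  MeanTendsto θ A (fun t => (starRingEnd ℂ) ((χ : C(G, ℂ)) t) * f t) a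

/-- `φ̌(χ) = ∫ χ(t) φ(t) dt`. -/
def checkFn (θ : Measure G) (φ : G → ℂ) (χ : Char G) : ℂ :=
  ∫ t, (χ : C(G, ℂ)) t * φ t ∂θ

/-- `(φ * ψ̃)(x) = ∫ φ(x - y) conj(ψ(-y)) dy`. -/
def tildeConv (θ : Measure G) (φ ψ : G → ℂ) : G → ℂ :=
  fun x => ∫ y, φ (x - y) * (starRingEnd ℂ) (ψ (-y)) ∂θ

/-- A pure point measure. -/
def PurePointM {X : Type*} [MeasurableSpace X] (σ : Measure X) : Prop :=
  ∀ B : Set X, MeasurableSet B → σ B = ∑' x : B, σ {(x : X)}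

end CharUse

section TB

variable (Γ : Type*) [MeasurableSpace Γ] [TopologicalSpace Γ] [AddCommGroup Γ]

/-- A translation bounded complex (Radon) measure, given by its total variation
measure together with a unimodular density (polar decomposition). -/
structure TBMeasure where
  tv : Measure Γ
  dens : Γ → ℂ
  dens_meas : Measurable dens
  dens_norm : ∀ x, ‖dens x‖ = 1
  bounded : ∀ K : Set Γ, IsCompact K → ∃ C : ℝ≥0∞, C ≠ ⊤ ∧ ∀ t : Γ, tv (t +ᵥ K) ≤ C

end TB

section TBUse

variable {G : Type*} [MeasurableSpace G] [TopologicalSpace G] [AddCommGroup G]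

/-- `∫ f dμ` for a translation bounded complex measure. -/
def TBMeasure.integral (μ : TBMeasure G) (f : G → ℂ) : ℂ := ∫ x, f x * μ.dens x ∂μ.tv

/-- `(μ * φ)(t) = ∫ φ(t - s) dμ(s)`. -/
def TBMeasure.conv (μ : TBMeasure G) (φ : G → ℂ) : G → ℂ :=
  fun t => ∫ s, φ (t - s) * μ.dens s ∂μ.tv

/-- `(1/θ(A_n)) · (μ|_{A_n} * ν̃|_{-A_n})(φ)`, the `n`-th Eberlein pairing of `μ` with `ν̃`. -/
def ebPair (θ : Measure G) (A : ℕ → Set G) (μ ν : TBMeasure G) (φ : G → ℂ) (n : ℕ) : ℂ :=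
  (∫ s in A n, ∫ u in A n, φ (s - u) * μ.dens s * (starRingEnd ℂ) (ν.dens u) ∂ν.tv ∂μ.tv) /
    ((θ (A n)).toReal : ℂ)

/-- Fourier–Bohr coefficient of a translation bounded measure along `A`. -/
def FBTendstoM (θ : Measure G) (A : ℕ → Set G) (μ : TBMeasure G) (χ : Char G) (a : ℂ) : Prop :=
  Tendsto (fun n =>
      (∫ t in A n, (starRingEnd ℂ) ((χ : C(G, ℂ)) t) * μ.dens t ∂μ.tv) /
        ((θ (A n)).toReal : ℂ))
    atTop (𝓝 a)

/-- `σ` is the Fourier transform of the positive definite measure `γ`: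
`∫_{Ĝ} |φ̌|² dσ = ∫_G (φ * φ̃) dγ` for all `φ ∈ C_c(G)`. -/
def IsFTOf (θ : Measure G) (γ : TBMeasure G) (σ : Measure (Char G)) : Prop :=
  ∀ φ : G → ℂ, IsCc φ → ∃ r : ℝ, 0 ≤ r ∧
    γ.integral (tildeConv θ φ φ) = (r : ℂ) ∧
    (∫⁻ χ, ENNReal.ofReal (‖checkFn θ φ χ‖ ^ 2) ∂σ) = ENNReal.ofReal r

end TBUse

section UniformDefs

variable {H : Type*} [UniformSpace H]

/-- `C_u(G)`: bounded uniformly continuous functions. -/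
def CuFun (f : H → ℂ) : Prop := UniformContinuous f ∧ ∃ C : ℝ, ∀ x, ‖f x‖ ≤ C

/-- Bohr (strong) almost periodicity. -/
def BohrAP [AddCommGroup H] (f : H → ℂ) : Prop :=
  CuFun f ∧ ∀ ε : ℝ, 0 < ε → RelDense {t : H | ∀ x, ‖f x - f (x - t)‖ ≤ ε}

end UniformDefs

end MAP

open MAP

section Helpers
set_option linter.unusedSectionVars false

open Filter MeasureTheory

variable {G : Type*} [MeasurableSpace G] [TopologicalSpace G] [AddCommGroup G]

lemma ennreal_limsup_add_le (u v : ℕ → ℝ≥0∞) :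
    limsup (fun n => u n + v n) atTop ≤ limsup u atTop + limsup v atTop := by
  by_cases ha : limsup u atTop = ⊤
  · rw [ha, top_add]; exact le_top
  by_cases hb : limsup v atTop = ⊤
  · rw [hb, add_top]; exact le_top
  refine ENNReal.le_of_forall_pos_le_add fun ε hε _ => ?_
  have hε2 : ((ε : ℝ≥0∞) / 2) ≠ 0 := by
    simp [ENNReal.div_eq_zero_iff, hε.ne']
  have hu := Filter.eventually_lt_of_limsup_lt (ENNReal.lt_add_right ha hε2)
  have hv := Filter.eventually_lt_of_limsup_lt (ENNReal.lt_add_right hb hε2)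
  have key : limsup (fun n => u n + v n) atTop ≤
      (limsup u atTop + (ε : ℝ≥0∞) / 2) + (limsup v atTop + (ε : ℝ≥0∞) / 2) := by
    refine Filter.limsup_le_of_le (by isBoundedDefault) ?_
    filter_upwards [hu, hv] with n h1 h2
    exact add_le_add h1.le h2.le
  refine key.trans (le_of_eq ?_)
  rw [add_add_add_comm, ENNReal.add_halves]

lemma limsup_rpow_eq (u : ℕ → ℝ≥0∞) {y : ℝ} (hy : 0 < y) :
    limsup (fun n => u n ^ y) atTop = (limsup u atTop) ^ y := by
  have h := (ENNReal.orderIsoRpow y hy).limsup_apply (u := u) (f := atTop)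
  simpa [ENNReal.orderIsoRpow_apply] using h.symm

lemma cs_lintegral (θ : Measure G) (S : Set G) {u v : G → ℂ}
    (hu : AEStronglyMeasurable u θ) (hv : AEStronglyMeasurable v θ) :
    (∫⁻ t in S, ENNReal.ofReal (‖u t * v t‖ ^ (1:ℝ)) ∂θ) ≤
      (∫⁻ t in S, ENNReal.ofReal (‖u t‖ ^ (2:ℝ)) ∂θ) ^ (2⁻¹:ℝ) *
      (∫⁻ t in S, ENNReal.ofReal (‖v t‖ ^ (2:ℝ)) ∂θ) ^ (2⁻¹:ℝ) := by
  have hpq : Real.HolderConjugate 2 2 := Real.holderConjugate_iff.mpr ⟨one_lt_two, by norm_num⟩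
  have hF : AEMeasurable (fun t => ENNReal.ofReal ‖u t‖) (θ.restrict S) :=
    (hu.restrict.norm.aemeasurable).ennreal_ofReal
  have hG : AEMeasurable (fun t => ENNReal.ofReal ‖v t‖) (θ.restrict S) :=
    (hv.restrict.norm.aemeasurable).ennreal_ofReal
  have key := ENNReal.lintegral_mul_le_Lp_mul_Lq (θ.restrict S) hpq hF hG
  have e1 : ∀ t : G, ENNReal.ofReal (‖u t * v t‖ ^ (1:ℝ)) =
      ENNReal.ofReal ‖u t‖ * ENNReal.ofReal ‖v t‖ := fun t => by
    rw [Real.rpow_one, norm_mul, ENNReal.ofReal_mul (norm_nonneg _)]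
  have e2 : ∀ (w : G → ℂ) (t : G), ENNReal.ofReal (‖w t‖ ^ (2:ℝ)) =
      ENNReal.ofReal ‖w t‖ ^ (2:ℝ) := fun w t =>
    (ENNReal.ofReal_rpow_of_nonneg (norm_nonneg _) (by norm_num)).symm
  simp only [e1, e2]
  simpa [one_div] using key

lemma lpAvg_cs (θ : Measure G) {S : Set G} (h0 : θ S ≠ 0) (hT : θ S ≠ ⊤) {u v : G → ℂ}
    (hu : AEStronglyMeasurable u θ) (hv : AEStronglyMeasurable v θ) :
    lpAvg θ S 1 (fun x => u x * v x) ≤ (lpAvg θ S 2 u) ^ (2⁻¹:ℝ) * (lpAvg θ S 2 v) ^ (2⁻¹:ℝ) := by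
  have h20 : (θ S) ^ (2⁻¹:ℝ) ≠ 0 := by
    simp [ENNReal.rpow_eq_zero_iff, h0, hT]
  have h2T : (θ S) ^ (2⁻¹:ℝ) ≠ ⊤ := by
    simp [ENNReal.rpow_eq_top_iff, h0, hT]
  have hc2 : (θ S) ^ (2⁻¹:ℝ) * (θ S) ^ (2⁻¹:ℝ) = θ S := by
    rw [← ENNReal.rpow_add _ _ h0 hT]; norm_num
  have hdd : ∀ x y : ℝ≥0∞,
      x / (θ S) ^ (2⁻¹:ℝ) * (y / (θ S) ^ (2⁻¹:ℝ)) = (x * y) / θ S := fun x y => by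
    rw [div_eq_mul_inv, div_eq_mul_inv, mul_mul_mul_comm,
      ← ENNReal.mul_inv (Or.inl h20) (Or.inl h2T), hc2, ← div_eq_mul_inv]
  simp only [lpAvg]
  rw [ENNReal.div_rpow_of_nonneg _ _ (by norm_num : (0:ℝ) ≤ 2⁻¹),
    ENNReal.div_rpow_of_nonneg _ _ (by norm_num : (0:ℝ) ≤ 2⁻¹), hdd]
  exact ENNReal.div_le_div_right (cs_lintegral θ S hu hv) _

lemma besSN_one_eq (θ : Measure G) (A : ℕ → Set G) (w : G → ℂ) :
    besSN θ A 1 w = limsup (fun n => lpAvg θ (A n) 1 w) atTop := by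
  simp [besSN]

lemma besSN_two_eq (θ : Measure G) (A : ℕ → Set G) (w : G → ℂ) :
    besSN θ A 2 w = limsup (fun n => (lpAvg θ (A n) 2 w) ^ (2⁻¹:ℝ)) atTop := by
  rw [besSN, limsup_rpow_eq _ (by norm_num : (0:ℝ) < 2⁻¹)]
  norm_num

lemma besSN_mul_le (θ : Measure G) {A : ℕ → Set G}
    (h0 : ∀ n, θ (A n) ≠ 0) (hT : ∀ n, θ (A n) ≠ ⊤) {u v : G → ℂ}
    (hu : AEStronglyMeasurable u θ) (hv : AEStronglyMeasurable v θ)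
    (hu2 : besSN θ A 2 u ≠ ⊤) (hv2 : besSN θ A 2 v ≠ ⊤) :
    besSN θ A 1 (fun x => u x * v x) ≤ besSN θ A 2 u * besSN θ A 2 v := by
  rw [besSN_two_eq] at hu2 hv2 ⊢
  rw [besSN_two_eq, besSN_one_eq]
  set a : ℕ → ℝ≥0∞ := fun n => (lpAvg θ (A n) 2 u) ^ (2⁻¹:ℝ) with ha
  set b : ℕ → ℝ≥0∞ := fun n => (lpAvg θ (A n) 2 v) ^ (2⁻¹:ℝ) with hb
  calc limsup (fun n => lpAvg θ (A n) 1 (fun x => u x * v x)) atTop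
      ≤ limsup (fun n => a n * b n) atTop := by
        refine limsup_le_limsup (Eventually.of_forall fun n => ?_)
        exact lpAvg_cs θ (h0 n) (hT n) hu hv
    _ ≤ limsup a atTop * limsup b atTop :=
        ENNReal.limsup_mul_le' (Or.inr hv2) (Or.inl hu2)

lemma besSN_two_le_bound (θ : Measure G) {A : ℕ → Set G}
    (h0 : ∀ n, θ (A n) ≠ 0) (hT : ∀ n, θ (A n) ≠ ⊤) {u : G → ℂ} {C : ℝ}
    (hC : 0 ≤ C) (hb : ∀ x, ‖u x‖ ≤ C) :
    besSN θ A 2 u ≤ ENNReal.ofReal C := by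
  have hn : ∀ n, lpAvg θ (A n) 2 u ≤ ENNReal.ofReal (C ^ (2:ℝ)) := fun n => by
    rw [lpAvg]
    have hle : (∫⁻ t in A n, ENNReal.ofReal (‖u t‖ ^ (2:ℝ)) ∂θ) ≤
        ENNReal.ofReal (C ^ (2:ℝ)) * θ (A n) := by
      rw [← MeasureTheory.setLIntegral_const]
      exact lintegral_mono fun t => ENNReal.ofReal_le_ofReal
        (Real.rpow_le_rpow (norm_nonneg _) (hb t) (by norm_num))
    refine le_trans (ENNReal.div_le_div_right hle _) ?_
    rw [mul_div_assoc, ENNReal.div_self (h0 n) (hT n), mul_one]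
  rw [besSN]
  have hls : limsup (fun n => lpAvg θ (A n) 2 u) atTop ≤ ENNReal.ofReal (C ^ (2:ℝ)) :=
    limsup_le_of_le (by isBoundedDefault) (Eventually.of_forall hn)
  calc (limsup (fun n => lpAvg θ (A n) 2 u) atTop) ^ (1/(2:ℝ))
      ≤ (ENNReal.ofReal (C ^ (2:ℝ))) ^ (1/(2:ℝ)) := ENNReal.rpow_le_rpow hls (by norm_num)
    _ = ENNReal.ofReal C := by
        rw [ENNReal.ofReal_rpow_of_nonneg (Real.rpow_nonneg hC _) (by norm_num),
          ← Real.rpow_mul hC]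
        norm_num

lemma besSN_one_add_le (θ : Measure G) (A : ℕ → Set G) {u v : G → ℂ}
    (hu : AEStronglyMeasurable u θ) :
    besSN θ A 1 (fun x => u x + v x) ≤ besSN θ A 1 u + besSN θ A 1 v := by
  rw [besSN_one_eq, besSN_one_eq, besSN_one_eq]
  refine le_trans (limsup_le_limsup (Eventually.of_forall fun n => ?_))
    (ennreal_limsup_add_le _ _)
  simp only [lpAvg, Real.rpow_one]
  rw [ENNReal.div_add_div_same]
  refine ENNReal.div_le_div_right ?_ _
  have hm : AEMeasurable (fun t => ENNReal.ofReal ‖u t‖) (θ.restrict (A n)) :=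
    (hu.restrict.norm.aemeasurable).ennreal_ofReal
  calc (∫⁻ t in A n, ENNReal.ofReal ‖u t + v t‖ ∂θ)
      ≤ ∫⁻ t in A n, (ENNReal.ofReal ‖u t‖ + ENNReal.ofReal ‖v t‖) ∂θ := by
        refine lintegral_mono fun t => ?_
        rw [← ENNReal.ofReal_add (norm_nonneg _) (norm_nonneg _)]
        exact ENNReal.ofReal_le_ofReal (norm_add_le _ _)
    _ = _ := lintegral_add_left' hm _

lemma MAP.IsTrigPoly.continuous' {P : G → ℂ} (h : IsTrigPoly P) : Continuous P := by
  obtain ⟨n, c, χ, rfl⟩ := h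
  exact continuous_finset_sum _ fun i _ => continuous_const.mul (χ i).1.continuous

lemma MAP.IsTrigPoly.bounded {P : G → ℂ} (h : IsTrigPoly P) :
    ∃ C : ℝ, 0 ≤ C ∧ ∀ x, ‖P x‖ ≤ C := by
  obtain ⟨n, c, χ, rfl⟩ := h
  refine ⟨∑ i, ‖c i‖, Finset.sum_nonneg fun i _ => norm_nonneg _, fun x => ?_⟩
  calc ‖∑ i, c i * (χ i).1 x‖ ≤ ∑ i, ‖c i * (χ i).1 x‖ := norm_sum_le _ _
    _ = ∑ i, ‖c i‖ := by
        refine Finset.sum_congr rfl fun i _ => ?_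
        rw [norm_mul, (χ i).2.1 x, mul_one]

def charMul (χ ψ : Char G) : Char G :=
  ⟨χ.1 * ψ.1, ⟨fun x => by simp [χ.2.1 x, ψ.2.1 x],
    fun x y => by simp only [ContinuousMap.mul_apply, χ.2.2 x y, ψ.2.2 x y]; ring⟩⟩

lemma MAP.IsTrigPoly.mul {P Q : G → ℂ} (hP : IsTrigPoly P) (hQ : IsTrigPoly Q) :
    IsTrigPoly fun x => P x * Q x := by
  obtain ⟨n, c, χ, rfl⟩ := hP
  obtain ⟨m, d, ψ, rfl⟩ := hQ
  refine ⟨n * m, fun k => c (finProdFinEquiv.symm k).1 * d (finProdFinEquiv.symm k).2,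
    fun k => charMul (χ (finProdFinEquiv.symm k).1) (ψ (finProdFinEquiv.symm k).2), ?_⟩
  funext x
  have h1 := Equiv.sum_comp (finProdFinEquiv (m := n) (n := m)).symm
    (fun p : Fin n × Fin m => (c p.1 * d p.2) * ((χ p.1).1 x * (ψ p.2).1 x))
  calc (∑ i, c i * (χ i).1 x) * (∑ j, d j * (ψ j).1 x)
      = ∑ p : Fin n × Fin m, (c p.1 * d p.2) * ((χ p.1).1 x * (ψ p.2).1 x) := by
        rw [Finset.sum_mul_sum]
        refine Eq.trans ?_
          (Fintype.sum_prod_type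
            (fun p : Fin n × Fin m => (c p.1 * d p.2) * ((χ p.1).1 x * (ψ p.2).1 x))).symm
        exact Finset.sum_congr rfl fun i _ => Finset.sum_congr rfl fun j _ => by ring
    _ = ∑ k : Fin (n * m), (c (finProdFinEquiv.symm k).1 * d (finProdFinEquiv.symm k).2) *
          ((χ (finProdFinEquiv.symm k).1).1 x * (ψ (finProdFinEquiv.symm k).2).1 x) := h1.symm
    _ = _ := by
        refine Finset.sum_congr rfl fun k _ => ?_
        simp [charMul]

end Helpers


theorem statement10
    {G : Type*} [AddCommGroup G] [TopologicalSpace G] [IsTopologicalAddGroup G]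
    [LocallyCompactSpace G] [SigmaCompactSpace G] [T2Space G]
    [MeasurableSpace G] [BorelSpace G]
    (θ : Measure G) [θ.IsAddHaarMeasure]
    (A : ℕ → Set G) (hA : IsVanHove θ A)
    (f g : G → ℂ) (hf : BapMem θ A 2 f) (hg : BapMem θ A 2 g) :
    BapMem θ A 1 (fun x => f x * g x) := by
  have h0 : ∀ n, θ (A n) ≠ 0 := fun n =>
    ((hA.isOpen n).measure_pos θ (hA.nonempty n)).ne'
  have hT : ∀ n, θ (A n) ≠ ⊤ := fun n =>
    (lt_of_le_of_lt (measure_mono subset_closure) (hA.relCompact n).measure_lt_top).ne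
  obtain ⟨⟨hfm, hfl⟩, hfap⟩ := hf
  obtain ⟨⟨hgm, hgl⟩, hgap⟩ := hg
  constructor
  · refine ⟨hfm.mul hgm, fun K hK => ?_⟩
    refine lt_of_le_of_lt (cs_lintegral θ K hfm hgm) (ENNReal.mul_lt_top ?_ ?_)
    · exact ENNReal.rpow_lt_top_of_nonneg (by norm_num) (hfl K hK).ne
    · exact ENNReal.rpow_lt_top_of_nonneg (by norm_num) (hgl K hK).ne
  intro ε hε
  obtain ⟨Q₀, hQ₀t, hQ₀⟩ := hgap 1 one_pos
  obtain ⟨C₀, hC₀0, hC₀b⟩ := hQ₀t.bounded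
  set δ₁ : ℝ := ε / (6 * (C₀ + 1)) with hδ₁def
  have hδ₁pos : 0 < δ₁ := by positivity
  obtain ⟨P, hPt, hP⟩ := hfap δ₁ hδ₁pos
  obtain ⟨CP, hCP0, hCPb⟩ := hPt.bounded
  set δ₂ : ℝ := ε / (6 * (CP + 1)) with hδ₂def
  have hδ₂pos : 0 < δ₂ := by positivity
  obtain ⟨Q, hQt, hQ⟩ := hgap δ₂ hδ₂pos
  refine ⟨fun x => P x * Q x, hPt.mul hQt, ?_⟩
  have hPm : AEStronglyMeasurable P θ := hPt.continuous'.aestronglyMeasurable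
  have hQ₀m : AEStronglyMeasurable Q₀ θ := hQ₀t.continuous'.aestronglyMeasurable
  have hQm : AEStronglyMeasurable Q θ := hQt.continuous'.aestronglyMeasurable
  have hfP : AEStronglyMeasurable (fun x => f x - P x) θ := hfm.sub hPm
  have hgQ₀ : AEStronglyMeasurable (fun x => g x - Q₀ x) θ := hgm.sub hQ₀m
  have hgQ : AEStronglyMeasurable (fun x => g x - Q x) θ := hgm.sub hQm
  have hfun : (fun x => f x * g x - P x * Q x) = fun x =>
      ((f x - P x) * (g x - Q₀ x) + (f x - P x) * Q₀ x) + P x * (g x - Q x) := by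
    funext x; ring
  rw [hfun]
  have hbQ₀ : besSN θ A 2 Q₀ ≤ ENNReal.ofReal C₀ := besSN_two_le_bound θ h0 hT hC₀0 hC₀b
  have hbP : besSN θ A 2 P ≤ ENNReal.ofReal CP := besSN_two_le_bound θ h0 hT hCP0 hCPb
  have B1 : besSN θ A 1 (fun x => (f x - P x) * (g x - Q₀ x)) ≤
      ENNReal.ofReal δ₁ * ENNReal.ofReal 1 := by
    refine le_trans (besSN_mul_le θ h0 hT hfP hgQ₀ hP.ne_top hQ₀.ne_top) ?_
    exact mul_le_mul' hP.le hQ₀.le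
  have B2 : besSN θ A 1 (fun x => (f x - P x) * Q₀ x) ≤
      ENNReal.ofReal δ₁ * ENNReal.ofReal C₀ := by
    refine le_trans (besSN_mul_le θ h0 hT hfP hQ₀m hP.ne_top
      (lt_of_le_of_lt hbQ₀ ENNReal.ofReal_lt_top).ne) ?_
    exact mul_le_mul' hP.le hbQ₀
  have B3 : besSN θ A 1 (fun x => P x * (g x - Q x)) ≤
      ENNReal.ofReal CP * ENNReal.ofReal δ₂ := by
    refine le_trans (besSN_mul_le θ h0 hT hPm hgQ
      (lt_of_le_of_lt hbP ENNReal.ofReal_lt_top).ne hQ.ne_top) ?_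
    exact mul_le_mul' hbP hQ.le
  have step1 : besSN θ A 1 (fun x =>
      ((f x - P x) * (g x - Q₀ x) + (f x - P x) * Q₀ x) + P x * (g x - Q x)) ≤
      (besSN θ A 1 (fun x => (f x - P x) * (g x - Q₀ x) + (f x - P x) * Q₀ x)
        + besSN θ A 1 (fun x => P x * (g x - Q x))) :=
    besSN_one_add_le θ A ((hfP.mul hgQ₀).add (hfP.mul hQ₀m))
  have step2 : besSN θ A 1 (fun x => (f x - P x) * (g x - Q₀ x) + (f x - P x) * Q₀ x) ≤
      besSN θ A 1 (fun x => (f x - P x) * (g x - Q₀ x))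
        + besSN θ A 1 (fun x => (f x - P x) * Q₀ x) :=
    besSN_one_add_le θ A (hfP.mul hgQ₀)
  have hreal : δ₁ * 1 + δ₁ * C₀ + CP * δ₂ < ε := by
    have e1 : δ₁ * 1 + δ₁ * C₀ = ε / 6 := by
      rw [hδ₁def]
      field_simp
      ring
    have e2 : CP * δ₂ ≤ ε / 6 := by
      rw [hδ₂def, mul_div_assoc']
      rw [div_le_div_iff₀ (by positivity) (by norm_num)]
      nlinarith [hε.le, hCP0]
    linarith
  calc besSN θ A 1 (fun x =>
      ((f x - P x) * (g x - Q₀ x) + (f x - P x) * Q₀ x) + P x * (g x - Q x))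
      ≤ (besSN θ A 1 (fun x => (f x - P x) * (g x - Q₀ x))
          + besSN θ A 1 (fun x => (f x - P x) * Q₀ x))
          + besSN θ A 1 (fun x => P x * (g x - Q x)) :=
        le_trans step1 (add_le_add_left step2 _)
    _ ≤ (ENNReal.ofReal δ₁ * ENNReal.ofReal 1 + ENNReal.ofReal δ₁ * ENNReal.ofReal C₀)
          + ENNReal.ofReal CP * ENNReal.ofReal δ₂ :=
        add_le_add (add_le_add B1 B2) B3
    _ = ENNReal.ofReal (δ₁ * 1 + δ₁ * C₀ + CP * δ₂) := by
        rw [← ENNReal.ofReal_mul hδ₁pos.le, ← ENNReal.ofReal_mul hδ₁pos.le,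
          ← ENNReal.ofReal_mul hCP0,
          ← ENNReal.ofReal_add (by positivity) (by positivity),
          ← ENNReal.ofReal_add (by positivity) (by positivity)]
    _ < ENNReal.ofReal ε := by
        exact (ENNReal.ofReal_lt_ofReal_iff hε).mpr hreal
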